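/- Let d, n, m ≥ 1 and θ₀ = 2π/(n+1). For k ∈ {0,…,n}^d let |φ_k⟩ = (1/√d)Σ_{i=1}^d e^{iθ₀k_i}|i⟩. Then (1/(n+1)^d) Σ_{k∈{0,…,n}^d} (|φ_k⟩⟨φ_k|)^{⊗m} = Σ_ν d_ν |φ_ν⟩⟨φ_ν|, where ν runs over residue classes in (ℤ/(n+1))^d containing some occupation vector β ∈ ℕ^d with Σ_i β_i = m and β ≡ ν componentwise mod (n+1), d_ν = Σ_{β≡ν, Σβ=m} m!/(d^m β!), the vectors |φ_ν⟩ = (1/√(d^m d_ν)) Σ_{β≡ν, Σβ=m} √(m!/β!) |β⟩ are unit vectors, and distinct |φ_ν⟩ are orthogonal. -/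

import Mathlib

open Matrix MeasureTheory
open scoped Kronecker ComplexOrder

noncomputable section

/-- The positive semidefinite square root of a matrix (junk value `0` if not PSD). -/
def matSqrt {ι : Type*} [Fintype ι] [DecidableEq ι] (A : Matrix ι ι ℂ) : Matrix ι ι ℂ :=
  open Classical in if h : A.PosSemidef then
    (h.1.eigenvectorUnitary : Matrix ι ι ℂ) * diagonal ((↑) ∘ Real.sqrt ∘ h.1.eigenvalues) *
      (star h.1.eigenvectorUnitary : Matrix ι ι ℂ) else 0

/-- The matrix absolute value `|X| = √(XᴴX)`. -/
def matAbs {ι : Type*} [Fintype ι] [DecidableEq ι] (X : Matrix ι ι ℂ) : Matrix ι ι ℂ :=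
  matSqrt (Xᴴ * X)

/-- Uhlmann fidelity `F(ρ,σ) = (Tr|√ρ√σ|)²`. -/
def fid {ι : Type*} [Fintype ι] [DecidableEq ι] (ρ σ : Matrix ι ι ℂ) : ℝ :=
  ((matAbs (matSqrt ρ * matSqrt σ)).trace).re ^ 2

/-- A density matrix: positive semidefinite with unit trace. -/
def IsDensity {ι : Type*} [Fintype ι] [DecidableEq ι] (ρ : Matrix ι ι ℂ) : Prop :=
  ρ.PosSemidef ∧ ρ.trace = 1

/-- The rank-one projector `|ψ⟩⟨ψ|`. -/
def ketbra {ι : Type*} (ψ : ι → ℂ) : Matrix ι ι ℂ := Matrix.vecMulVec ψ (star ψ)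

/-- The `l`-fold tensor power of a matrix on `ℂ^d`, acting on `(ℂ^d)^{⊗l}`. -/
def tpow {d : ℕ} (M : Matrix (Fin d) (Fin d) ℂ) (l : ℕ) :
    Matrix (Fin l → Fin d) (Fin l → Fin d) ℂ :=
  Matrix.of fun f g => ∏ i, M (f i) (g i)

/-- Loewner order: `A ⪯ B` iff `B - A` is positive semidefinite. -/
def loewnerLE {ι : Type*} [Fintype ι] (A B : Matrix ι ι ℂ) : Prop := (B - A).PosSemidef

/-- Projector onto the symmetric subspace of `(ℂ^d)^{⊗l}`:
`(1/l!) Σ_{π ∈ S_l} U_π` where `U_π` permutes the tensor factors. -/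
def symProj (d l : ℕ) : Matrix (Fin l → Fin d) (Fin l → Fin d) ℂ :=
  (l.factorial : ℂ)⁻¹ •
    ∑ π : Equiv.Perm (Fin l), Matrix.of fun f g => if f = (fun i => g (π i)) then (1 : ℂ) else 0


/-- Occupation numbers of a product basis index `f` of `(ℂ^d)^{⊗l}`. -/
def occ {d l : ℕ} (f : Fin l → Fin d) : Fin d → ℕ :=
  fun i => (Finset.univ.filter fun j => f j = i).card

/-- Normalized occupation-number basis vector `|α⟩` of the symmetric subspace:
the normalized symmetrization of the product vector with `α i` factors `|i⟩`. -/
def occKet (d l : ℕ) (α : Fin d → ℕ) : (Fin l → Fin d) → ℂ := fun f =>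
  if occ f = α then
    ((Real.sqrt ((∏ i, ((α i).factorial : ℝ)) / (l.factorial : ℝ)) : ℝ) : ℂ) else 0

/-- Multi-phase state `|φ_θ⟩ = (1/√d) Σᵢ e^{iθᵢ}|i⟩`. -/
def phaseState (d : ℕ) (θ : Fin d → ℝ) : Fin d → ℂ :=
  fun i => ((Real.sqrt d : ℝ) : ℂ)⁻¹ * Complex.exp (Complex.I * (θ i : ℂ))

/-- Discretized multi-phase state `|φ_k⟩` with phases multiples of `θ₀ = 2π/(n+1)`. -/
def phaseKet (d n : ℕ) (k : Fin d → Fin (n + 1)) : Fin d → ℂ :=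
  phaseState d (fun i => 2 * Real.pi / (n + 1) * (k i : ℕ))



section AuxiliaryForStatement13

lemma occ_sum {d l : ℕ} (f : Fin l → Fin d) : ∑ i, occ f i = l := by
  classical
  have := Finset.card_eq_sum_card_fiberwise
    (s := (Finset.univ : Finset (Fin l))) (t := (Finset.univ : Finset (Fin d)))
    (f := f) (fun x _ => Finset.mem_univ _)
  simpa [occ, Finset.card_univ] using this.symm

lemma occ_le {d l : ℕ} (f : Fin l → Fin d) (i : Fin d) : occ f i ≤ l := by
  calc occ f i ≤ ∑ i, occ f i :=
        Finset.single_le_sum (fun _ _ => Nat.zero_le _) (Finset.mem_univ i)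
    _ = l := occ_sum f

lemma prod_comp_occ {d l : ℕ} {M : Type*} [CommMonoid M] (f : Fin l → Fin d) (E : Fin d → M) :
    ∏ j, E (f j) = ∏ i, E i ^ occ f i := by
  classical
  rw [← Finset.prod_fiberwise_of_maps_to (g := f)
    (fun x (_ : x ∈ Finset.univ) => Finset.mem_univ (f x)) (fun j => E (f j))]
  refine Finset.prod_congr rfl fun i _ => ?_
  rw [Finset.prod_congr rfl (fun j hj => by rw [(Finset.mem_filter.mp hj).2]),
    Finset.prod_const]
  rfl

lemma occ_snoc {d l : ℕ} (g : Fin l → Fin d) (i : Fin d) (j : Fin d) :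
    occ (Fin.snoc g i : Fin (l+1) → Fin d) j = occ g j + if i = j then 1 else 0 := by
  classical
  simp only [occ, Finset.card_filter]
  rw [Fin.sum_univ_castSucc]
  simp [Fin.snoc_castSucc, Fin.snoc_last]

lemma count_occ_mul {d : ℕ} : ∀ (l : ℕ) (β : Fin d → ℕ), (∑ i, β i = l) →
    (Finset.univ.filter fun f : Fin l → Fin d => occ f = β).card * ∏ i, (β i).factorial
      = l.factorial := by
  classical
  intro l
  induction l with
  | zero =>
    intro β hβ
    have hβ0 : β = fun _ => 0 := by
      funext i
      exact Finset.sum_eq_zero_iff.mp hβ i (Finset.mem_univ i)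
    subst hβ0
    have h1 : (Finset.univ.filter fun f : Fin 0 → Fin d => occ f = fun _ => 0) = Finset.univ := by
      refine Finset.filter_true_of_mem fun f _ => ?_
      funext i
      simp [occ]
    rw [h1]
    simp [Finset.card_univ]
  | succ l ih =>
    intro β hβ
    -- per-fiber count
    have hfiber : ∀ i : Fin d,
        ((Finset.univ.filter fun f : Fin (l+1) → Fin d => occ f = β).filter
            (fun f => f (Fin.last l) = i)).card * ∏ j, (β j).factorial
          = β i * l.factorial := by
      intro i
      by_cases hβi : β i = 0
      · have : ((Finset.univ.filter fun f : Fin (l+1) → Fin d => occ f = β).filter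
            (fun f => f (Fin.last l) = i)) = ∅ := by
          refine Finset.eq_empty_of_forall_notMem fun f hf => ?_
          simp only [Finset.mem_filter, Finset.mem_univ, true_and] at hf
          obtain ⟨h1, h2⟩ := hf
          have : 0 < occ f i := by
            apply Finset.card_pos.mpr
            exact ⟨Fin.last l, Finset.mem_filter.mpr ⟨Finset.mem_univ _, h2⟩⟩
          rw [h1, hβi] at this
          omega
        simp [this, hβi]
      · -- bijection with functions Fin l → Fin d of occupation β'
        set β' : Fin d → ℕ := Function.update β i (β i - 1) with hβ'
        have hβ'sum : ∑ j, β' j = l := by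
          have : ∑ j, β' j + 1 = ∑ j, β j := by
            rw [hβ']
            rw [← Finset.sum_add_sum_compl {i}, ← Finset.sum_add_sum_compl {i} β]
            simp only [Finset.sum_singleton, Function.update_self]
            have : ∑ j ∈ ({i}ᶜ : Finset (Fin d)), Function.update β i (β i - 1) j
                = ∑ j ∈ ({i}ᶜ : Finset (Fin d)), β j := by
              refine Finset.sum_congr rfl fun j hj => ?_
              have : j ≠ i := by simpa using hj
              simp [Function.update_of_ne this]
            rw [this]; omega
          omega
        have hprod : ∏ j, (β j).factorial = β i * ∏ j, (β' j).factorial := by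
          have key : ∀ γ : Fin d → ℕ, ∏ j, (γ j).factorial
              = (∏ j ∈ Finset.univ \ {i}, (γ j).factorial) * (γ i).factorial := fun γ =>
            Finset.prod_eq_prod_diff_singleton_mul (Finset.mem_univ i) _
          rw [key β, key β']
          have h1 : ∏ j ∈ Finset.univ \ {i}, (β' j).factorial
              = ∏ j ∈ Finset.univ \ {i}, (β j).factorial := by
            refine Finset.prod_congr rfl fun j hj => ?_
            have : j ≠ i := by simp at hj; exact hj
            simp [hβ', Function.update_of_ne this]
          rw [h1]
          have h2 : (β i).factorial = β i * (β' i).factorial := by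
            have hb : β' i = β i - 1 := by simp [hβ']
            rw [hb]
            conv_lhs => rw [show β i = (β i - 1) + 1 by omega]
            rw [Nat.factorial_succ]
            congr 1; omega
          rw [h2]; ring
        have hcard : ((Finset.univ.filter fun f : Fin (l+1) → Fin d => occ f = β).filter
              (fun f => f (Fin.last l) = i)).card
            = (Finset.univ.filter fun g : Fin l → Fin d => occ g = β').card := by
          apply Finset.card_nbij' (fun f => Fin.init f) (fun g => Fin.snoc g i)
          · intro f hf
            simp only [Finset.mem_coe, Finset.mem_filter, Finset.mem_univ, true_and] at hf ⊢
            obtain ⟨h1, h2⟩ := hf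
            have hfs : (Fin.snoc (Fin.init f) i : Fin (l+1) → Fin d) = f := by
              rw [← h2]; exact Fin.snoc_init_self f
            funext j
            have := occ_snoc (Fin.init f) i j
            rw [hfs, h1] at this
            rcases eq_or_ne i j with h | h
            · subst h
              have h3 : β i = occ (Fin.init f) i + 1 := by simpa using this
              simp only [hβ', Function.update_self]
              omega
            · simp only [if_neg h, add_zero] at this
              simp only [hβ', Function.update_of_ne (Ne.symm h)]
              omega
          · intro g hg
            simp only [Finset.mem_coe, Finset.mem_filter, Finset.mem_univ, true_and] at hg ⊢
            constructor
            · funext j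
              rw [occ_snoc g i j, hg]
              rcases eq_or_ne i j with h | h
              · subst h; simp [hβ', Function.update_self]; omega
              · simp only [hβ', Function.update_of_ne (Ne.symm h)]
                simp [h]
            · simp [Fin.snoc_last]
          · intro f hf
            simp only [Finset.mem_coe, Finset.mem_filter, Finset.mem_univ, true_and] at hf
            rw [← hf.2]; exact Fin.snoc_init_self f
          · intro g _
            simp
        rw [hcard]
        have := ih β' hβ'sum
        -- ∏ β! = β i * ∏ β'!
        rw [hprod, ← mul_assoc, mul_comm _ (β i), mul_assoc, this]
    rw [Finset.card_eq_sum_card_fiberwise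
      (f := fun f : Fin (l+1) → Fin d => f (Fin.last l))
      (t := (Finset.univ : Finset (Fin d))) (fun f _ => Finset.mem_univ _), Finset.sum_mul]
    calc ∑ i, ((Finset.univ.filter fun f : Fin (l+1) → Fin d => occ f = β).filter
            (fun f => f (Fin.last l) = i)).card * ∏ j, (β j).factorial
        = ∑ i, β i * l.factorial := Finset.sum_congr rfl fun i _ => hfiber i
      _ = (l+1) * l.factorial := by rw [← Finset.sum_mul, hβ]
      _ = (l+1).factorial := (Nat.factorial_succ l).symm

lemma geom_mod (n a b : ℕ) :
    ∑ c : Fin (n+1), Complex.exp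
        (Complex.I * ((2 * Real.pi / (n+1) : ℝ) : ℂ) * ((a:ℂ) - (b:ℂ))) ^ (c : ℕ)
      = if a % (n+1) = b % (n+1) then ((n+1 : ℕ) : ℂ) else 0 := by
  set θ : ℂ := ((2 * Real.pi / (n+1) : ℝ) : ℂ) with hθdef
  set ζ : ℂ := Complex.exp (Complex.I * θ * ((a:ℂ) - (b:ℂ))) with hζdef
  have hθ : θ * ((n+1 : ℕ) : ℂ) = ((2 * Real.pi : ℝ) : ℂ) := by
    have h1 : (2 * Real.pi / (n+1) : ℝ) * ((n+1 : ℕ) : ℝ) = 2 * Real.pi := by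
      have h2 : ((n+1 : ℕ) : ℝ) ≠ 0 := by positivity
      push_cast at h2 ⊢
      field_simp
    rw [hθdef, ← Complex.ofReal_natCast, ← Complex.ofReal_mul, h1]
  by_cases h : a % (n+1) = b % (n+1)
  · -- ζ = 1
    have hd : ((n+1 : ℕ) : ℤ) ∣ (b : ℤ) - (a : ℤ) := (Nat.modEq_iff_dvd).mp h
    obtain ⟨t, ht⟩ := hd
    have hζ : ζ = 1 := by
      rw [hζdef]
      have e1 : Complex.I * θ * ((a:ℂ) - (b:ℂ)) = ((-t : ℤ) : ℂ) * (2 * (Real.pi : ℝ) * Complex.I) := by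
        have hab : (a:ℂ) - (b:ℂ) = ((n+1 : ℕ) : ℂ) * ((-t : ℤ) : ℂ) := by
          have h3 : (a : ℤ) - b = ((n+1 : ℕ) : ℤ) * (-t) := by linear_combination -ht
          calc (a:ℂ) - (b:ℂ) = (((a : ℤ) - b : ℤ) : ℂ) := by push_cast; ring
            _ = ((((n+1:ℕ):ℤ) * (-t) : ℤ) : ℂ) := by rw [h3]
            _ = ((n+1 : ℕ) : ℂ) * ((-t : ℤ) : ℂ) := by push_cast; ring
        rw [hab]
        push_cast
        push_cast at hθ
        linear_combination (Complex.I * (-(t:ℂ))) * hθ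
      rw [e1]
      exact Complex.exp_int_mul_two_pi_mul_I _
    rw [hζ]
    simp [h]
  · -- geometric series vanishes
    have hπ : ((2 * Real.pi : ℝ) : ℂ) ≠ 0 :=
      Complex.ofReal_ne_zero.mpr (by positivity)
    have hn1 : ((n+1 : ℕ) : ℂ) ≠ 0 := Nat.cast_ne_zero.mpr (Nat.succ_ne_zero n)
    have hζ1 : ζ ≠ 1 := by
      intro hζ
      rw [hζdef, Complex.exp_eq_one_iff] at hζ
      obtain ⟨t, ht⟩ := hζ
      have hθne : θ ≠ 0 := by
        rw [hθdef]
        exact Complex.ofReal_ne_zero.mpr (by positivity)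
      have e2' : (Complex.I * θ) * ((a:ℂ) - (b:ℂ))
          = (Complex.I * θ) * ((t : ℂ) * ((n+1:ℕ):ℂ)) := by
        calc (Complex.I * θ) * ((a:ℂ) - (b:ℂ))
            = Complex.I * θ * ((a:ℂ) - (b:ℂ)) := by ring
          _ = (t : ℂ) * (2 * (Real.pi : ℝ) * Complex.I) := ht
          _ = (t : ℂ) * ((θ * ((n+1:ℕ):ℂ)) * Complex.I) := by rw [hθ]; push_cast; ring
          _ = (Complex.I * θ) * ((t : ℂ) * ((n+1:ℕ):ℂ)) := by ring
      have e3 : (a:ℂ) - (b:ℂ) = (t : ℂ) * ((n+1:ℕ):ℂ) :=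
        mul_left_cancel₀ (mul_ne_zero Complex.I_ne_zero hθne) e2'
      have e4 : (a : ℤ) - b = t * ((n+1:ℕ):ℤ) := by
        have h5 : (((a : ℤ) - b : ℤ) : ℂ) = ((t * ((n+1:ℕ):ℤ) : ℤ) : ℂ) := by
          push_cast
          push_cast at e3
          linear_combination e3
        exact_mod_cast h5
      have : ((n+1:ℕ):ℤ) ∣ (b : ℤ) - a := ⟨-t, by linear_combination -e4⟩
      exact h (Nat.modEq_iff_dvd.mpr this)
    have hpow : ζ ^ (n+1) = 1 := by
      rw [hζdef, ← Complex.exp_nat_mul]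
      have e1 : ((n+1:ℕ):ℂ) * (Complex.I * θ * ((a:ℂ) - (b:ℂ)))
          = (((a:ℤ) - b : ℤ) : ℂ) * (2 * (Real.pi:ℝ) * Complex.I) := by
        have hab : (a:ℂ) - (b:ℂ) = (((a:ℤ) - b : ℤ) : ℂ) := by push_cast; ring
        rw [hab]
        push_cast
        push_cast at hθ
        linear_combination Complex.I * ((a:ℂ) - (b:ℂ)) * hθ
      rw [e1]
      exact Complex.exp_int_mul_two_pi_mul_I _
    rw [Fin.sum_univ_eq_sum_range (fun c => ζ ^ c) (n+1), geom_sum_eq hζ1, hpow]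
    simp [h]

lemma lhs_entry (d n m : ℕ) (f g : Fin m → Fin d) :
    (∑ k : Fin d → Fin (n + 1), tpow (ketbra (phaseKet d n k)) m) f g
      = (((Real.sqrt d : ℝ) : ℂ))⁻¹ ^ (m + m) * ((n+1:ℕ):ℂ) ^ d *
        (if ∀ i, occ f i % (n+1) = occ g i % (n+1) then 1 else 0) := by
  classical
  set A : ℂ := Complex.I * ((2 * Real.pi / (n+1) : ℝ) : ℂ) with hA
  set r : ℂ := (((Real.sqrt d : ℝ) : ℂ))⁻¹ with hr
  have hφ : ∀ (k : Fin d → Fin (n+1)) (i : Fin d),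
      phaseKet d n k i = r * Complex.exp (A * ((k i : ℕ) : ℂ)) := by
    intro k i
    simp only [phaseKet, phaseState, hr, hA]
    congr 1
    push_cast
    ring
  have hφs : ∀ (k : Fin d → Fin (n+1)) (i : Fin d),
      star (phaseKet d n k i) = r * Complex.exp (-(A * ((k i : ℕ) : ℂ))) := by
    intro k i
    rw [hφ, star_mul']
    congr 1
    · rw [hr]
      simp [Complex.star_def, map_inv₀, Complex.conj_ofReal]
    · rw [Complex.star_def, ← Complex.exp_conj]
      congr 1
      rw [hA]
      simp only [_root_.map_mul, Complex.conj_I, Complex.conj_ofReal, map_natCast]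
      ring
  have hentry : (∑ k : Fin d → Fin (n + 1), tpow (ketbra (phaseKet d n k)) m) f g
      = ∑ k : Fin d → Fin (n+1), ∏ j, (phaseKet d n k (f j) * star (phaseKet d n k (g j))) := by
    simp [tpow, ketbra, Matrix.sum_apply, Matrix.vecMulVec_apply]
  rw [hentry]
  have hk : ∀ k : Fin d → Fin (n+1),
      (∏ j, (phaseKet d n k (f j) * star (phaseKet d n k (g j))))
        = ∏ i : Fin d, ((r * Complex.exp (A * ((k i : ℕ):ℂ))) ^ occ f i
            * (r * Complex.exp (-(A * ((k i : ℕ):ℂ)))) ^ occ g i) := by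
    intro k
    rw [Finset.prod_mul_distrib]
    rw [Finset.prod_congr rfl (fun j _ => hφ k (f j)),
        Finset.prod_congr rfl (fun j _ => hφs k (g j)),
        prod_comp_occ f (fun i => r * Complex.exp (A * ((k i : ℕ):ℂ))),
        prod_comp_occ g (fun i => r * Complex.exp (-(A * ((k i : ℕ):ℂ)))),
        ← Finset.prod_mul_distrib]
  rw [Finset.sum_congr rfl (fun k _ => hk k)]
  rw [← Fintype.prod_sum (fun (i : Fin d) (c : Fin (n+1)) =>
    (r * Complex.exp (A * ((c : ℕ):ℂ))) ^ occ f i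
      * (r * Complex.exp (-(A * ((c : ℕ):ℂ)))) ^ occ g i)]
  have hsum_i : ∀ i : Fin d,
      (∑ c : Fin (n+1), (r * Complex.exp (A * ((c : ℕ):ℂ))) ^ occ f i
          * (r * Complex.exp (-(A * ((c : ℕ):ℂ)))) ^ occ g i)
        = r ^ (occ f i + occ g i) *
            (if occ f i % (n+1) = occ g i % (n+1) then ((n+1:ℕ):ℂ) else 0) := by
    intro i
    rw [← geom_mod n (occ f i) (occ g i), Finset.mul_sum]
    refine Finset.sum_congr rfl fun c _ => ?_
    have hexp : Complex.exp (A * ((c:ℕ):ℂ)) ^ occ f i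
        * Complex.exp (-(A * ((c:ℕ):ℂ))) ^ occ g i
        = Complex.exp (A * (((occ f i : ℕ):ℂ) - ((occ g i : ℕ):ℂ))) ^ (c : ℕ) := by
      rw [← Complex.exp_nat_mul, ← Complex.exp_nat_mul, ← Complex.exp_nat_mul,
        ← Complex.exp_add]
      congr 1
      ring
    calc (r * Complex.exp (A * ((c : ℕ):ℂ))) ^ occ f i
          * (r * Complex.exp (-(A * ((c : ℕ):ℂ)))) ^ occ g i
        = (r ^ occ f i * r ^ occ g i) * (Complex.exp (A * ((c:ℕ):ℂ)) ^ occ f i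
            * Complex.exp (-(A * ((c:ℕ):ℂ))) ^ occ g i) := by ring
      _ = r ^ (occ f i + occ g i)
            * Complex.exp (A * (((occ f i : ℕ):ℂ) - ((occ g i : ℕ):ℂ))) ^ (c : ℕ) := by
          rw [hexp, pow_add]
      _ = r ^ (occ f i + occ g i)
            * Complex.exp (Complex.I * ((2 * Real.pi / (n+1) : ℝ) : ℂ)
                * (((occ f i : ℕ):ℂ) - ((occ g i : ℕ):ℂ))) ^ (c : ℕ) := by rw [hA]
  rw [Finset.prod_congr rfl (fun i _ => hsum_i i)]
  rw [Finset.prod_mul_distrib, Finset.prod_pow_eq_pow_sum]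
  have h1 : ∑ i, (occ f i + occ g i) = m + m := by
    rw [Finset.sum_add_distrib, occ_sum, occ_sum]
  rw [h1]
  have h2 : ∀ i : Fin d, (if occ f i % (n+1) = occ g i % (n+1) then ((n+1:ℕ):ℂ) else 0)
      = ((n+1:ℕ):ℂ) * (if occ f i % (n+1) = occ g i % (n+1) then 1 else 0) := by
    intro i; split_ifs <;> simp
  rw [Finset.prod_congr rfl (fun i _ => h2 i), Finset.prod_mul_distrib,
    Finset.prod_const, Finset.card_univ, Fintype.prod_boole]
  simp only [Fintype.card_fin]
  ring_nf

end AuxiliaryForStatement13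

/-- the uniform mixture of m-fold tensor powers of the discretized
multi-phase states decomposes as `Σ_ν d_ν |φ_ν⟩⟨φ_ν|` with `|φ_ν⟩` orthonormal. -/
theorem multi_phase_m_fold_decomposition
    (d n m : ℕ) (hd : 1 ≤ d) (hn : 1 ≤ n) (hm : 1 ≤ m)
    -- B ν : the occupation vectors of total weight m in the residue class ν mod (n+1)
    (B : (Fin d → Fin (n + 1)) → Finset (Fin d → Fin (m + 1)))
    (hB : ∀ ν, B ν = Finset.univ.filter (fun β : Fin d → Fin (m + 1) =>
      (∑ i, (β i : ℕ)) = m ∧ ∀ i, (β i : ℕ) % (n + 1) = (ν i : ℕ)))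
    -- d_ν = Σ_{β ≡ ν, Σβ = m} m!/(d^m β!)
    (dν : (Fin d → Fin (n + 1)) → ℝ)
    (hdν : ∀ ν, dν ν = ∑ β ∈ B ν,
      (m.factorial : ℝ) / ((d : ℝ) ^ m * ∏ i, ((β i : ℕ).factorial : ℝ)))
    -- |φ_ν⟩ = (1/√(d^m d_ν)) Σ_{β ≡ ν, Σβ = m} √(m!/β!) |β⟩
    (φν : (Fin d → Fin (n + 1)) → (Fin m → Fin d) → ℂ)
    (hφν : ∀ ν, φν ν = fun f =>
      (((Real.sqrt ((d : ℝ) ^ m * dν ν))⁻¹ : ℝ) : ℂ) * ∑ β ∈ B ν,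
        ((Real.sqrt ((m.factorial : ℝ) / ∏ i, ((β i : ℕ).factorial : ℝ)) : ℝ) : ℂ) *
          occKet d m (fun i => (β i : ℕ)) f) :
    (((n + 1 : ℂ) ^ d)⁻¹ • ∑ k : Fin d → Fin (n + 1), tpow (ketbra (phaseKet d n k)) m
        = ∑ ν : Fin d → Fin (n + 1), (dν ν : ℂ) • ketbra (φν ν)) ∧
    (∀ ν, (B ν).Nonempty → star (φν ν) ⬝ᵥ φν ν = 1) ∧
    (∀ ν ν', ν ≠ ν' → star (φν ν) ⬝ᵥ φν ν' = 0) := by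
  classical
  have hmem : ∀ ν β, β ∈ B ν ↔ ((∑ i, (β i : ℕ)) = m ∧ ∀ i, (β i : ℕ) % (n + 1) = (ν i : ℕ)) := by
    intro ν β
    rw [hB]
    simp
  have hoccle : ∀ (f : Fin m → Fin d) (i : Fin d), occ f i < m + 1 :=
    fun f i => Nat.lt_succ_of_le (occ_le f i)
  have hβof_mem : ∀ (f : Fin m → Fin d) (ν : Fin d → Fin (n+1)),
      (∀ i, occ f i % (n+1) = (ν i : ℕ)) →
      (fun i => (⟨occ f i, hoccle f i⟩ : Fin (m+1))) ∈ B ν := by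
    intro f ν hres
    rw [hmem]
    exact ⟨by simpa using occ_sum f, fun i => hres i⟩
  have hd' : (0:ℝ) < (d:ℝ) := by exact_mod_cast hd
  have hdν_pos : ∀ ν, (B ν).Nonempty → 0 < dν ν := by
    intro ν hne
    rw [hdν]
    refine Finset.sum_pos (fun β _ => ?_) hne
    have h1 : (0:ℝ) < (m.factorial : ℝ) := by positivity
    have h2 : (0:ℝ) < (d : ℝ) ^ m * ∏ i, (((β i : ℕ)).factorial : ℝ) := by positivity
    exact div_pos h1 h2
  -- closed formula for φν
  have hφeq : ∀ (ν : Fin d → Fin (n+1)) (f : Fin m → Fin d),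
      φν ν f = if ∀ i, occ f i % (n+1) = (ν i : ℕ)
        then (((Real.sqrt ((d:ℝ)^m * dν ν))⁻¹ : ℝ) : ℂ) else 0 := by
    intro ν f
    have hval1 : ∀ β : Fin d → Fin (m+1), occ f = (fun i => (β i : ℕ)) →
        ((Real.sqrt ((m.factorial : ℝ) / ∏ i, ((β i : ℕ).factorial : ℝ)) : ℝ) : ℂ) *
          occKet d m (fun i => (β i : ℕ)) f = 1 := by
      intro β hocc
      simp only [occKet]
      rw [if_pos hocc]
      rw [← Complex.ofReal_mul, ← Real.sqrt_mul (by positivity)]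
      have h1 : (0:ℝ) < ∏ i, ((β i : ℕ).factorial : ℝ) := by positivity
      have h2 : (0:ℝ) < (m.factorial : ℝ) := by positivity
      have h3 : ((m.factorial : ℝ) / ∏ i, ((β i : ℕ).factorial : ℝ)) *
          ((∏ i, ((β i : ℕ).factorial : ℝ)) / (m.factorial : ℝ)) = 1 := by
        field_simp
      rw [h3, Real.sqrt_one, Complex.ofReal_one]
    have hval0 : ∀ β : Fin d → Fin (m+1), occ f ≠ (fun i => (β i : ℕ)) →
        ((Real.sqrt ((m.factorial : ℝ) / ∏ i, ((β i : ℕ).factorial : ℝ)) : ℝ) : ℂ) *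
          occKet d m (fun i => (β i : ℕ)) f = 0 := by
      intro β hocc
      simp only [occKet]
      rw [if_neg hocc, mul_zero]
    simp only [hφν]
    by_cases hc : ∀ i, occ f i % (n+1) = (ν i : ℕ)
    · rw [if_pos hc]
      have hsum1 : (∑ β ∈ B ν,
          ((Real.sqrt ((m.factorial : ℝ) / ∏ i, ((β i : ℕ).factorial : ℝ)) : ℝ) : ℂ) *
            occKet d m (fun i => (β i : ℕ)) f) = 1 := by
        rw [Finset.sum_eq_single (fun i => (⟨occ f i, hoccle f i⟩ : Fin (m+1)))]
        · exact hval1 _ (funext fun i => rfl)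
        · intro b _ hb
          refine hval0 b fun hocc => hb (funext fun i => Fin.ext ?_)
          exact (congrFun hocc i).symm
        · intro hnot
          exact absurd (hβof_mem f ν hc) hnot
      rw [hsum1, mul_one]
    · rw [if_neg hc]
      have hsum0 : (∑ β ∈ B ν,
          ((Real.sqrt ((m.factorial : ℝ) / ∏ i, ((β i : ℕ).factorial : ℝ)) : ℝ) : ℂ) *
            occKet d m (fun i => (β i : ℕ)) f) = 0 := by
        refine Finset.sum_eq_zero fun β hβm => ?_
        refine hval0 β fun hocc => hc fun i => ?_
        rw [congrFun hocc i]
        exact ((hmem ν β).mp hβm).2 i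
      rw [hsum0, mul_zero]
  have hrpow : (((Real.sqrt d : ℝ) : ℂ))⁻¹ ^ (m + m) = ((d:ℂ)^m)⁻¹ := by
    have h2 : (Real.sqrt d) ^ (m+m) = (d:ℝ)^m := by
      rw [show m + m = 2*m by ring, pow_mul, Real.sq_sqrt (by positivity : (0:ℝ) ≤ (d:ℝ))]
    have h1 : (((Real.sqrt d : ℝ) : ℂ)) ^ (m+m) = (d:ℂ)^m := by
      calc (((Real.sqrt d : ℝ) : ℂ)) ^ (m+m) = (((Real.sqrt d ^ (m+m) : ℝ)) : ℂ) := by push_cast; ring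
        _ = (((d:ℝ)^m : ℝ) : ℂ) := by rw [h2]
        _ = (d:ℂ)^m := by push_cast; ring
    rw [inv_pow, h1]
  have hn1C : ((n:ℂ)+1) ≠ 0 := by
    have h0 : ((n+1 : ℕ) : ℂ) ≠ 0 := Nat.cast_ne_zero.mpr (Nat.succ_ne_zero n)
    push_cast at h0
    exact h0
  have hdC : ((d:ℂ))^m ≠ 0 :=
    pow_ne_zero _ (Nat.cast_ne_zero.mpr (by omega))
  refine ⟨?_, ?_, ?_⟩
  · -- the matrix identity
    ext f g
    rw [Matrix.smul_apply, lhs_entry d n m f g, Matrix.sum_apply]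
    simp only [Matrix.smul_apply, ketbra, Matrix.vecMulVec_apply, Pi.star_apply, smul_eq_mul]
    by_cases hfg : ∀ i, occ f i % (n+1) = occ g i % (n+1)
    · rw [if_pos hfg]
      set ν₀ : Fin d → Fin (n+1) := fun i => ⟨occ f i % (n+1), Nat.mod_lt _ (Nat.succ_pos n)⟩
        with hν₀
      have hres : ∀ i, occ f i % (n + 1) = (ν₀ i : ℕ) := fun i => rfl
      have hresg : ∀ i, occ g i % (n + 1) = (ν₀ i : ℕ) := fun i => (hfg i).symm.trans (hres i)
      have hneB : (B ν₀).Nonempty := ⟨_, hβof_mem f ν₀ hres⟩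
      have hpos : 0 < dν ν₀ := hdν_pos ν₀ hneB
      have hxpos : 0 < (d:ℝ)^m * dν ν₀ := by positivity
      rw [Finset.sum_eq_single ν₀]
      · rw [hφeq ν₀ f, hφeq ν₀ g, if_pos hres, if_pos hresg]
        rw [Complex.star_def, Complex.conj_ofReal, hrpow]
        have hvalR : (dν ν₀ : ℝ) * ((Real.sqrt ((d:ℝ)^m * dν ν₀))⁻¹ *
            (Real.sqrt ((d:ℝ)^m * dν ν₀))⁻¹) = ((d:ℝ)^m)⁻¹ := by
          rw [← mul_inv, Real.mul_self_sqrt hxpos.le]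
          field_simp
        have hR : (dν ν₀ : ℂ) * ((((Real.sqrt ((d:ℝ)^m * dν ν₀))⁻¹ : ℝ) : ℂ) *
            (((Real.sqrt ((d:ℝ)^m * dν ν₀))⁻¹ : ℝ) : ℂ)) = ((d:ℂ)^m)⁻¹ := by
          rw [← Complex.ofReal_mul, ← Complex.ofReal_mul, hvalR]
          push_cast
          ring
        rw [hR]
        push_cast
        field_simp
      · intro ν' _ hne'
        rw [hφeq ν' f, if_neg, zero_mul, mul_zero]
        intro hall
        exact hne' (funext fun i => Fin.ext ((hall i).symm.trans (hres i)))
      · intro hnot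
        exact absurd (Finset.mem_univ ν₀) hnot
    · rw [if_neg hfg, mul_zero, mul_zero]
      symm
      refine Finset.sum_eq_zero fun ν _ => ?_
      by_cases h1 : ∀ i, occ f i % (n+1) = (ν i : ℕ)
      · by_cases h2 : ∀ i, occ g i % (n+1) = (ν i : ℕ)
        · exact absurd (fun i => (h1 i).trans (h2 i).symm) hfg
        · rw [hφeq ν g, if_neg h2, star_zero, mul_zero, mul_zero]
      · rw [hφeq ν f, if_neg h1, zero_mul, mul_zero]
  · -- normalization
    intro ν hne
    have hpos := hdν_pos ν hne
    have hxpos : 0 < (d:ℝ)^m * dν ν := by positivity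
    have hsum_count : ∑ β ∈ B ν, ((m.factorial : ℝ) / ∏ i, ((β i : ℕ).factorial : ℝ))
        = (d:ℝ)^m * dν ν := by
      rw [hdν, Finset.mul_sum]
      refine Finset.sum_congr rfl fun β _ => ?_
      have h1 : (0:ℝ) < ∏ i, ((β i : ℕ).factorial : ℝ) := by positivity
      field_simp
    simp only [dotProduct, Pi.star_apply]
    have hterm : ∀ f : Fin m → Fin d, star (φν ν f) * φν ν f
        = (if ∀ i, occ f i % (n+1) = (ν i : ℕ)
            then ((((d:ℝ)^m * dν ν)⁻¹ : ℝ) : ℂ) else 0) := by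
      intro f
      rw [hφeq ν f]
      split_ifs with h
      · rw [Complex.star_def, Complex.conj_ofReal, ← Complex.ofReal_mul,
          ← mul_inv, Real.mul_self_sqrt hxpos.le]
      · simp
    rw [Finset.sum_congr rfl fun f _ => hterm f]
    have hsplit : ∀ f : Fin m → Fin d,
        (if ∀ i, occ f i % (n+1) = (ν i : ℕ) then (1:ℂ) else 0)
          = ∑ β ∈ B ν, (if occ f = (fun i => (β i : ℕ)) then (1:ℂ) else 0) := by
      intro f
      by_cases hc : ∀ i, occ f i % (n+1) = (ν i : ℕ)
      · rw [if_pos hc, Finset.sum_eq_single (fun i => (⟨occ f i, hoccle f i⟩ : Fin (m+1)))]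
        · rw [if_pos (funext fun i => rfl)]
        · intro b _ hb
          rw [if_neg]
          intro hocc
          exact hb (funext fun i => Fin.ext (congrFun hocc i).symm)
        · intro hnot
          exact absurd (hβof_mem f ν hc) hnot
      · rw [if_neg hc]
        symm
        refine Finset.sum_eq_zero fun β hβm => ?_
        rw [if_neg]
        intro hocc
        exact hc fun i => by rw [congrFun hocc i]; exact ((hmem ν β).mp hβm).2 i
    have hstep : (∑ f : Fin m → Fin d, (if ∀ i, occ f i % (n+1) = (ν i : ℕ)
            then ((((d:ℝ)^m * dν ν)⁻¹ : ℝ) : ℂ) else 0))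
        = ((((d:ℝ)^m * dν ν)⁻¹ : ℝ) : ℂ) * ∑ β ∈ B ν,
            (((Finset.univ.filter fun f : Fin m → Fin d =>
              occ f = fun i => (β i : ℕ)).card : ℕ) : ℂ) := by
      calc (∑ f : Fin m → Fin d, (if ∀ i, occ f i % (n+1) = (ν i : ℕ)
              then ((((d:ℝ)^m * dν ν)⁻¹ : ℝ) : ℂ) else 0))
          = ∑ f : Fin m → Fin d, ((((d:ℝ)^m * dν ν)⁻¹ : ℝ) : ℂ) *
              (if ∀ i, occ f i % (n+1) = (ν i : ℕ) then (1:ℂ) else 0) := by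
            refine Finset.sum_congr rfl fun f _ => ?_
            split_ifs <;> simp
        _ = ((((d:ℝ)^m * dν ν)⁻¹ : ℝ) : ℂ) * ∑ f : Fin m → Fin d,
              (if ∀ i, occ f i % (n+1) = (ν i : ℕ) then (1:ℂ) else 0) := by
            rw [Finset.mul_sum]
        _ = ((((d:ℝ)^m * dν ν)⁻¹ : ℝ) : ℂ) * ∑ f : Fin m → Fin d, ∑ β ∈ B ν,
              (if occ f = (fun i => (β i : ℕ)) then (1:ℂ) else 0) := by
            rw [Finset.sum_congr rfl fun f _ => hsplit f]
        _ = ((((d:ℝ)^m * dν ν)⁻¹ : ℝ) : ℂ) * ∑ β ∈ B ν, ∑ f : Fin m → Fin d,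
              (if occ f = (fun i => (β i : ℕ)) then (1:ℂ) else 0) := by
            rw [Finset.sum_comm]
        _ = ((((d:ℝ)^m * dν ν)⁻¹ : ℝ) : ℂ) * ∑ β ∈ B ν,
              (((Finset.univ.filter fun f : Fin m → Fin d =>
                occ f = fun i => (β i : ℕ)).card : ℕ) : ℂ) := by
            rw [Finset.sum_congr rfl fun β _ => Finset.sum_boole (fun f : Fin m → Fin d => occ f = fun i => (β i : ℕ)) Finset.univ]
    rw [hstep]
    have hcount : ∀ β ∈ B ν, (((Finset.univ.filter fun f : Fin m → Fin d =>
        occ f = fun i => (β i : ℕ)).card : ℕ) : ℝ)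
          = (m.factorial : ℝ) / ∏ i, ((β i : ℕ).factorial : ℝ) := by
      intro β hβm
      have hsumβ : ∑ i, (β i : ℕ) = m := ((hmem ν β).mp hβm).1
      have hc := count_occ_mul m (fun i => (β i : ℕ)) hsumβ
      have h1 : (0:ℝ) < ∏ i, ((β i : ℕ).factorial : ℝ) := by positivity
      rw [eq_div_iff h1.ne']
      exact_mod_cast congrArg (Nat.cast : ℕ → ℝ) hc
    have hfin : (∑ β ∈ B ν, (((Finset.univ.filter fun f : Fin m → Fin d =>
          occ f = fun i => (β i : ℕ)).card : ℕ) : ℂ))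
        = ((((d:ℝ)^m * dν ν) : ℝ) : ℂ) := by
      have hR : (∑ β ∈ B ν, (((Finset.univ.filter fun f : Fin m → Fin d =>
            occ f = fun i => (β i : ℕ)).card : ℕ) : ℝ)) = (d:ℝ)^m * dν ν := by
        rw [Finset.sum_congr rfl hcount, hsum_count]
      calc (∑ β ∈ B ν, (((Finset.univ.filter fun f : Fin m → Fin d =>
            occ f = fun i => (β i : ℕ)).card : ℕ) : ℂ))
          = (((∑ β ∈ B ν, (((Finset.univ.filter fun f : Fin m → Fin d =>
              occ f = fun i => (β i : ℕ)).card : ℕ) : ℝ)) : ℝ) : ℂ) := by push_cast; rfl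
        _ = ((((d:ℝ)^m * dν ν) : ℝ) : ℂ) := by rw [hR]
    rw [hfin, ← Complex.ofReal_mul, inv_mul_cancel₀ hxpos.ne', Complex.ofReal_one]
  · -- orthogonality
    intro ν ν' hνν'
    simp only [dotProduct, Pi.star_apply]
    refine Finset.sum_eq_zero fun f _ => ?_
    rw [hφeq ν f, hφeq ν' f]
    by_cases h1 : ∀ i, occ f i % (n+1) = (ν i : ℕ)
    · by_cases h2 : ∀ i, occ f i % (n+1) = (ν' i : ℕ)
      · exact absurd (funext fun i => Fin.ext ((h1 i).symm.trans (h2 i))) hνν'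
      · rw [if_neg h2, mul_zero]
    · rw [if_neg h1, star_zero, zero_mul]
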